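/- Fix integers n ≥ 1 and l ≥ 1. The composite σ' = S_n ∘ S_{n−1} ∘ ⋯ ∘ S_2 ∘ S_1 (with S_1 applied first) is a bijection of B_l, it is given explicitly by σ'(x_1,…,x_{n+1}) = (x_2,…,x_{n+1},x_1), and for every i ∈ {0,1,…,n} it satisfies σ' ∘ f̃_i = f̃_{σ(i)} ∘ σ' and σ' ∘ ẽ_i = ẽ_{σ(i)} ∘ σ' as partial maps, where σ(i) is the unique element of {0,…,n} congruent to i − 1 modulo n+1. -/

import Mathlib

/-- Iterated application of a partial map: `OptIter g m a` is `g^m a`. -/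
def OptIter {α : Type} (g : α → Option α) : ℕ → α → Option α
  | 0, a => some a
  | m + 1, a => (g a).bind (OptIter g m)

/-- Apply the partial maps `g 1`, `g 2`, ..., `g m` in this order. -/
def ChainOpt {α : Type} (g : ℕ → α → Option α) (m : ℕ) (a : α) : Option α :=
  (List.range m).foldl (fun acc j => acc.bind (g (j + 1))) (some a)

/-- A set with partial Kashiwara-type operators indexed by `{0, 1, ..., n}`. -/
structure PreCrystal (n : ℕ) where
  carrier : Type
  e : Fin (n + 1) → carrier → Option carrier
  f : Fin (n + 1) → carrier → Option carrier

namespace PreCrystal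

variable {n : ℕ}

/-- `ε_i(b) = max {m ≥ 0 : ẽ_i^m b is defined}`. -/
noncomputable def eps (C : PreCrystal n) (i : Fin (n + 1)) (b : C.carrier) : ℕ :=
  sSup {m | OptIter (C.e i) m b ≠ none}

/-- `φ_i(b) = max {m ≥ 0 : f̃_i^m b is defined}`. -/
noncomputable def phi (C : PreCrystal n) (i : Fin (n + 1)) (b : C.carrier) : ℕ :=
  sSup {m | OptIter (C.f i) m b ≠ none}

/-- `ẽ_i^max b = ẽ_i^{ε_i(b)} b`. -/
noncomputable def eMax (C : PreCrystal n) (i : Fin (n + 1)) (b : C.carrier) : Option C.carrier :=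
  OptIter (C.e i) (C.eps i b) b

/-- The Weyl group operator `S_i`: `f̃_i^{φ_i(b)-ε_i(b)} b` if `φ_i(b) ≥ ε_i(b)`,
and `ẽ_i^{ε_i(b)-φ_i(b)} b` if `φ_i(b) ≤ ε_i(b)`. -/
noncomputable def S (C : PreCrystal n) (i : Fin (n + 1)) (b : C.carrier) : Option C.carrier :=
  if C.eps i b ≤ C.phi i b then OptIter (C.f i) (C.phi i b - C.eps i b) b
  else OptIter (C.e i) (C.eps i b - C.phi i b) b

/-- The tensor product `C ⊗ D` of two crystals, with the Kashiwara tensor product rule. -/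
noncomputable def tensor (C D : PreCrystal n) : PreCrystal n where
  carrier := C.carrier × D.carrier
  e := fun i p =>
    if D.eps i p.2 ≤ C.phi i p.1 then (C.e i p.1).map (fun b => (b, p.2))
    else (D.e i p.2).map (fun b => (p.1, b))
  f := fun i p =>
    if D.eps i p.2 < C.phi i p.1 then (C.f i p.1).map (fun b => (b, p.2))
    else (D.f i p.2).map (fun b => (p.1, b))

end PreCrystal

/-- Kashiwara raising operator `ẽ_i` of type `A_n^{(1)}` on `(n+1)`-tuples of
nonnegative integers (zero-indexed: coordinate `j` is `x_{j+1}`): defined iff the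
coordinate at index `i` is positive, it adds 1 at index `i-1` (cyclically) and
subtracts 1 at index `i`. -/
def eA (n : ℕ) (i : Fin (n + 1)) (x : Fin (n + 1) → ℕ) : Option (Fin (n + 1) → ℕ) :=
  if 0 < x i then
    some (Function.update (Function.update x (i - 1) (x (i - 1) + 1)) i (x i - 1))
  else none

/-- Kashiwara lowering operator `f̃_i` of type `A_n^{(1)}`: defined iff the coordinate
at index `i-1` is positive, it subtracts 1 at index `i-1` and adds 1 at index `i`. -/
def fA (n : ℕ) (i : Fin (n + 1)) (x : Fin (n + 1) → ℕ) : Option (Fin (n + 1) → ℕ) :=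
  if 0 < x (i - 1) then
    some (Function.update (Function.update x i (x i + 1)) (i - 1) (x (i - 1) - 1))
  else none

/-- The crystal operators of type `A_n^{(1)}` on all `(n+1)`-tuples; the crystal `B_l`
is the subset of tuples with coordinate sum `l`. -/
def BA (n : ℕ) : PreCrystal n where
  carrier := Fin (n + 1) → ℕ
  e := eA n
  f := fA n

/-- The unique element of `{0, ..., n}` congruent to `-k` modulo `n+1`. -/
def negIdx (n : ℕ) (k : ℤ) : Fin (n + 1) :=
  ⟨((-k) % ((n : ℤ) + 1)).toNat, by
    have h1 := Int.emod_nonneg (-k) (by omega : ((n : ℤ) + 1) ≠ 0)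
    have h2 := Int.emod_lt_of_pos (-k) (by omega : (0 : ℤ) < (n : ℤ) + 1)
    omega⟩

/-- The cyclic shift `σ : (x_1, ..., x_{n+1}) ↦ (x_2, ..., x_{n+1}, x_1)`. -/
def shiftA (n : ℕ) (x : Fin (n + 1) → ℕ) : Fin (n + 1) → ℕ := fun j => x (j + 1)

/-- The map `t(x_1, ..., x_{n+1}) = (x_n, x_{n-1}, ..., x_1)`. -/
def tA (n : ℕ) (x : Fin (n + 1) → ℕ) : Fin n → ℕ :=
  fun k => x ⟨n - 1 - (k : ℕ), by omega⟩

/-- The `(N+1)`-fold tensor power `B ⊗ ... ⊗ B`, associated to the left. -/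
noncomputable def BPow (n : ℕ) : ℕ → PreCrystal n
  | 0 => BA n
  | N + 1 => (BPow n N).tensor (BA n)

/-- The element `b_1 ⊗ ... ⊗ b_{N+1}` of the `(N+1)`-fold tensor power. -/
noncomputable def tensorOf (n : ℕ) : (N : ℕ) → (Fin (N + 1) → (Fin (n + 1) → ℕ)) → (BPow n N).carrier
  | 0, b => b 0
  | N + 1, b => (tensorOf n N (fun j => b j.castSucc), b (Fin.last (N + 1)))

/-- Membership in `B_{l_1} ⊗ ... ⊗ B_{l_{N+1}}`: each factor has coordinate sum `l_j`. -/
def memBPow (n : ℕ) : (N : ℕ) → (Fin (N + 1) → ℕ) → (BPow n N).carrier → Prop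
  | 0, l, x => ∑ j, x j = l 0
  | N + 1, l, p => memBPow n N (fun j => l j.castSucc) p.1 ∧ ∑ j, p.2 j = l (Fin.last (N + 1))

/-- The componentwise cyclic shift `σ_B = σ ⊗ ... ⊗ σ` on a tensor power. -/
noncomputable def shiftPow (n : ℕ) : (N : ℕ) → (BPow n N).carrier → (BPow n N).carrier
  | 0, x => shiftA n x
  | N + 1, p => (shiftPow n N p.1, shiftA n p.2)


section Aux

variable {n : ℕ}

lemma fin_one_ne_zero (hn : 1 ≤ n) : (1 : Fin (n + 1)) ≠ 0 := by
  intro h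
  have h2 := congrArg Fin.val h
  rw [Fin.val_one', Fin.val_zero, Nat.one_mod_eq_one.mpr (by omega)] at h2
  exact absurd h2 one_ne_zero

lemma sub_one_ne (hn : 1 ≤ n) (i : Fin (n + 1)) : i - 1 ≠ i := by
  intro h
  exact fin_one_ne_zero hn (sub_eq_self.mp h)

lemma optIter_eA (hn : 1 ≤ n) (i : Fin (n + 1)) (m : ℕ) (x : Fin (n + 1) → ℕ) :
    OptIter (eA n i) m x =
      if m ≤ x i then
        some (Function.update (Function.update x (i - 1) (x (i - 1) + m)) i (x i - m))
      else none := by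
  have hne := sub_one_ne hn i
  induction m generalizing x with
  | zero => simp [OptIter]
  | succ m ih =>
    rw [OptIter]
    by_cases h : 0 < x i
    · have hx : eA n i x = some (Function.update (Function.update x (i - 1) (x (i - 1) + 1)) i (x i - 1)) := by
        rw [eA, if_pos h]
      rw [hx, Option.bind_some, ih]
      have h1 : (Function.update (Function.update x (i - 1) (x (i - 1) + 1)) i (x i - 1)) i = x i - 1 := by
        simp
      have h2 : (Function.update (Function.update x (i - 1) (x (i - 1) + 1)) i (x i - 1)) (i - 1) = x (i - 1) + 1 := by
        simp [Function.update_apply, hne]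
      rw [h1, h2]
      by_cases hm : m + 1 ≤ x i
      · rw [if_pos (by omega), if_pos hm]
        congr 1
        funext j
        rcases eq_or_ne j i with rfl | hji
        · simp; omega
        · rcases eq_or_ne j (i - 1) with rfl | hji1
          · simp [Function.update_apply, hne, hji]; omega
          · simp [Function.update_apply, hji, hji1]
      · rw [if_neg (by omega), if_neg hm]
    · have hx : eA n i x = none := by rw [eA, if_neg h]
      rw [hx, Option.bind_none, if_neg (by omega)]

lemma optIter_fA (hn : 1 ≤ n) (i : Fin (n + 1)) (m : ℕ) (x : Fin (n + 1) → ℕ) :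
    OptIter (fA n i) m x =
      if m ≤ x (i - 1) then
        some (Function.update (Function.update x i (x i + m)) (i - 1) (x (i - 1) - m))
      else none := by
  have hne := sub_one_ne hn i
  induction m generalizing x with
  | zero => simp [OptIter]
  | succ m ih =>
    rw [OptIter]
    by_cases h : 0 < x (i - 1)
    · have hx : fA n i x = some (Function.update (Function.update x i (x i + 1)) (i - 1) (x (i - 1) - 1)) := by
        rw [fA, if_pos h]
      rw [hx, Option.bind_some, ih]
      have h1 : (Function.update (Function.update x i (x i + 1)) (i - 1) (x (i - 1) - 1)) (i - 1) = x (i - 1) - 1 := by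
        simp
      have h2 : (Function.update (Function.update x i (x i + 1)) (i - 1) (x (i - 1) - 1)) i = x i + 1 := by
        simp [Function.update_apply, hne.symm, hne]
      rw [h1, h2]
      by_cases hm : m + 1 ≤ x (i - 1)
      · rw [if_pos (by omega), if_pos hm]
        congr 1
        funext j
        rcases eq_or_ne j (i - 1) with rfl | hji1
        · simp; omega
        · rcases eq_or_ne j i with rfl | hji
          · simp [Function.update_apply, hne, hji1]; omega
          · simp [Function.update_apply, hji, hji1]
      · rw [if_neg (by omega), if_neg hm]
    · have hx : fA n i x = none := by rw [fA, if_neg h]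
      rw [hx, Option.bind_none, if_neg (by omega)]

lemma eps_BA (hn : 1 ≤ n) (i : Fin (n + 1)) (x : Fin (n + 1) → ℕ) :
    (BA n).eps i x = x i := by
  have hset : {m | OptIter ((BA n).e i) m x ≠ none} = Set.Iic (x i) := by
    ext m
    simp only [Set.mem_setOf_eq, Set.mem_Iic, BA, optIter_eA hn]
    split_ifs with h <;> simp [h]
  unfold PreCrystal.eps
  rw [hset, csSup_Iic]

lemma phi_BA (hn : 1 ≤ n) (i : Fin (n + 1)) (x : Fin (n + 1) → ℕ) :
    (BA n).phi i x = x (i - 1) := by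
  have hset : {m | OptIter ((BA n).f i) m x ≠ none} = Set.Iic (x (i - 1)) := by
    ext m
    simp only [Set.mem_setOf_eq, Set.mem_Iic, BA, optIter_fA hn]
    split_ifs with h <;> simp [h]
  unfold PreCrystal.phi
  rw [hset, csSup_Iic]

lemma S_BA (hn : 1 ≤ n) (i : Fin (n + 1)) (x : Fin (n + 1) → ℕ) :
    (BA n).S i x =
      some (Function.update (Function.update x (i - 1) (x i)) i (x (i - 1))) := by
  have hne := sub_one_ne hn i
  unfold PreCrystal.S
  rw [eps_BA hn, phi_BA hn]
  by_cases h : x i ≤ x (i - 1)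
  · rw [if_pos h]
    show OptIter (fA n i) _ x = _
    rw [optIter_fA hn, if_pos (by omega)]
    congr 1
    funext j
    rcases eq_or_ne j i with rfl | hji
    · simp [Function.update_apply, hne.symm, hne]; omega
    · rcases eq_or_ne j (i - 1) with rfl | hji1
      · simp [Function.update_apply, hne, hji]; omega
      · simp [Function.update_apply, hji, hji1]
  · rw [if_neg h]
    show OptIter (eA n i) _ x = _
    rw [optIter_eA hn, if_pos (by omega)]
    congr 1
    funext j
    rcases eq_or_ne j i with rfl | hji
    · simp; omega
    · rcases eq_or_ne j (i - 1) with rfl | hji1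
      · simp [Function.update_apply, hne, hji]; omega
      · simp [Function.update_apply, hji, hji1]

lemma chainOpt_succ {α : Type} (g : ℕ → α → Option α) (m : ℕ) (a : α) :
    ChainOpt g (m + 1) a = (ChainOpt g m a).bind (g (m + 1)) := by
  simp [ChainOpt, List.range_succ]

lemma chain_eq (hn : 1 ≤ n) (x : Fin (n + 1) → ℕ) :
    ∀ k, k ≤ n →
    ChainOpt (fun j => (BA n).S (Fin.ofNat (n + 1) (j : ℕ))) k x =
      some (fun j : Fin (n + 1) =>
        if (j : ℕ) < k then x (j + 1) else if (j : ℕ) = k then x 0 else x j) := by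
  intro k
  induction k with
  | zero =>
    intro _
    simp only [ChainOpt, List.range_zero, List.foldl_nil]
    congr 1
    funext j
    rcases eq_or_ne (j : ℕ) 0 with h | h
    · have : j = 0 := Fin.ext h
      simp [this]
    · simp [h]
  | succ k ih =>
    intro hk
    have hcs := chainOpt_succ (fun j => (BA n).S (Fin.ofNat (n + 1) j)) k x
    rw [hcs, ih (by omega)]
    erw [Option.bind_some]
    set i : Fin (n + 1) := Fin.ofNat (n + 1) (k + 1) with hidef
    have hiv : (i : ℕ) = k + 1 := by
      rw [hidef, Fin.val_ofNat, Nat.mod_eq_of_lt (by omega)]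
    have hisub : i - 1 = Fin.ofNat (n + 1) k := by
      rw [sub_eq_iff_eq_add]
      exact Fin.ext (by rw [hiv, Fin.val_add, Fin.val_ofNat, Fin.val_one', Nat.mod_eq_of_lt (by omega : k < n + 1), Nat.mod_eq_of_lt (by omega : 1 < n + 1), Nat.mod_eq_of_lt (by omega)])
    have hi1v : ((i - 1 : Fin (n + 1)) : ℕ) = k := by
      rw [hisub, Fin.val_ofNat, Nat.mod_eq_of_lt (by omega)]
    have hne : i - 1 ≠ i := sub_one_ne hn i
    rw [S_BA hn]
    congr 1
    funext j
    rcases eq_or_ne j i with rfl | hji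
    · rw [Function.update_self]
      simp [hi1v, hiv]
    · rw [Function.update_of_ne hji]
      rcases eq_or_ne j (i - 1) with rfl | hji1
      · rw [Function.update_self]
        simp only [hiv, hi1v]
        rw [if_neg (by omega), if_neg (by omega), if_pos (by omega)]
        congr 1
        exact (sub_add_cancel i 1).symm
      · rw [Function.update_of_ne hji1]
        have hv1 : (j : ℕ) ≠ k + 1 := fun h => hji (Fin.ext (by omega))
        have hv2 : (j : ℕ) ≠ k := fun h => hji1 (Fin.ext (by omega))
        split_ifs <;> first | rfl | omega

lemma shift_sum (x : Fin (n + 1) → ℕ) : ∑ j, shiftA n x j = ∑ j, x j :=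
  Fintype.sum_equiv (Equiv.addRight 1) _ _ (fun _ => rfl)

end Aux

/-- Proposition 2.1 for type `A_n^{(1)}`: the composite `σ' = S_n ∘ ⋯ ∘ S_1` (with
`S_1` applied first) is, on `B_l`, the cyclic shift `σ'(x_1,…,x_{n+1}) =
(x_2,…,x_{n+1},x_1)`; the cyclic shift is a bijection of `B_l`; and for every
`i ∈ {0,…,n}` one has `σ' ∘ f̃_i = f̃_{σ(i)} ∘ σ'` and `σ' ∘ ẽ_i = ẽ_{σ(i)} ∘ σ'`
as partial maps on `B_l`, where `σ(i) = i - 1 (mod n+1)`. -/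
theorem stmt7 (n l : ℕ) (hn : 1 ≤ n) (hl : 1 ≤ l) :
    (∀ x : Fin (n + 1) → ℕ, ∑ j, x j = l →
      ChainOpt (fun j => (BA n).S (Fin.ofNat (n + 1) (j : ℕ))) n x = some (shiftA n x)) ∧
    Set.BijOn (shiftA n) {x : Fin (n + 1) → ℕ | ∑ j, x j = l}
      {x : Fin (n + 1) → ℕ | ∑ j, x j = l} ∧
    (∀ i : Fin (n + 1), ∀ x : Fin (n + 1) → ℕ, ∑ j, x j = l →
      Option.map (shiftA n) ((BA n).f i x) = (BA n).f (i - 1) (shiftA n x) ∧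
      Option.map (shiftA n) ((BA n).e i x) = (BA n).e (i - 1) (shiftA n x)) := by
  refine ⟨?_, ?_, ?_⟩
  · intro x _
    rw [chain_eq hn x n le_rfl]
    congr 1
    funext j
    rcases eq_or_ne (j : ℕ) n with h | h
    · have hj : j = Fin.last n := Fin.ext h
      subst hj
      simp [shiftA, Fin.last_add_one]
    · have hlt : (j : ℕ) < n := lt_of_le_of_ne (by omega) h
      simp [shiftA, hlt]
  · refine ⟨?_, ?_, ?_⟩
    · intro x hx
      simp only [Set.mem_setOf_eq] at *
      rw [shift_sum]; exact hx
    · intro x _ y _ h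
      funext j
      have h1 := congrFun h (j - 1)
      simpa [shiftA, sub_add_cancel] using h1
    · intro y hy
      refine ⟨fun j => y (j - 1), ?_, ?_⟩
      · simp only [Set.mem_setOf_eq] at *
        rw [← hy]
        exact Fintype.sum_equiv (Equiv.subRight 1) _ _ (fun _ => rfl)
      · funext j
        simp [shiftA, add_sub_cancel_right]
  · intro i x _
    have hne : i - 1 ≠ i := sub_one_ne hn i
    have hc : shiftA n x (i - 1 - 1) = x (i - 1) := by
      simp [shiftA, sub_add_cancel]
    have hc2 : shiftA n x (i - 1) = x i := by
      simp [shiftA, sub_add_cancel]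
    constructor
    · show Option.map (shiftA n) (fA n i x) = fA n (i - 1) (shiftA n x)
      rw [fA, fA, hc]
      by_cases h : 0 < x (i - 1)
      · rw [if_pos h, if_pos h, Option.map_some]
        congr 1
        funext j
        show (Function.update (Function.update x i (x i + 1)) (i - 1) (x (i - 1) - 1)) (j + 1) = _
        have e1 : (j = i - 1 - 1) = (j + 1 = i - 1) := by
          rw [eq_sub_iff_add_eq]
        have e2 : (j = i - 1) = (j + 1 = i) := by
          rw [eq_sub_iff_add_eq]
        simp only [Function.update_apply, shiftA, hc, hc2, e1, e2, sub_add_cancel]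
      · rw [if_neg h, if_neg h, Option.map_none]
    · show Option.map (shiftA n) (eA n i x) = eA n (i - 1) (shiftA n x)
      rw [eA, eA, hc2]
      by_cases h : 0 < x i
      · rw [if_pos h, if_pos h, Option.map_some]
        congr 1
        funext j
        show (Function.update (Function.update x (i - 1) (x (i - 1) + 1)) i (x i - 1)) (j + 1) = _
        have e1 : (j = i - 1 - 1) = (j + 1 = i - 1) := by
          rw [eq_sub_iff_add_eq]
        have e2 : (j = i - 1) = (j + 1 = i) := by
          rw [eq_sub_iff_add_eq]
        simp only [Function.update_apply, shiftA, hc, hc2, e1, e2, sub_add_cancel]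
      · rw [if_neg h, if_neg h, Option.map_none]
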